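/- Let a 2-regular instance have its first k requests assigned to pairwise distinct slots, and suppose the (k+1)-st request R = {x₁,x₂} is assigned to a free slot s_x. Let y₁ ≤ y₂ be the vertices whose propagation arrows pointed to s_x before this assignment. Then only propagation arrows attached to vertices in the closed interval from min(x₁,y₁) to max(x₂,y₂) change: every vertex outside this interval has exactly the same propagation-arrow targets before and after the assignment. -/

import Mathlib

/- Slotted OSCM-2 model.  Slots and vertices are indexed by `Fin n` with the natural
linear order.  A request is an unordered pair of two distinct vertices, stored with
`fst < snd`. -/

structure Request (n : ℕ) where
  fst : Fin n
  snd : Fin n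
  lt : fst < snd

/-- Two edges `(s,u)` and `(s',u')` cross iff `(s < s' ∧ u' < u) ∨ (s' < s ∧ u < u')`. -/
def edgesCross {n : ℕ} (s s' u u' : Fin n) : Prop :=
  (s < s' ∧ u' < u) ∨ (s' < s ∧ u < u')

instance {n : ℕ} (s s' u u' : Fin n) : Decidable (edgesCross s s' u u') := by
  unfold edgesCross; infer_instance

/-- Number of crossing pairs of edges between request `R` placed at slot `s` and
request `R'` placed at slot `s'`. -/
def pairCross {n : ℕ} (R R' : Request n) (s s' : Fin n) : ℕ :=
  (if edgesCross s s' R.fst R'.fst then 1 else 0) +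
  (if edgesCross s s' R.fst R'.snd then 1 else 0) +
  (if edgesCross s s' R.snd R'.fst then 1 else 0) +
  (if edgesCross s s' R.snd R'.snd then 1 else 0)

/-- Crossing number of an assignment `σ` for the instance `R`. -/
def cr {n : ℕ} (R : Fin n → Request n) (σ : Fin n → Fin n) : ℕ :=
  ∑ p ∈ Finset.univ.filter (fun p : Fin n × Fin n => p.1 < p.2),
    pairCross (R p.1) (R p.2) (σ p.1) (σ p.2)

/-- Minimum crossing number over all assignments (bijections). -/
noncomputable def opt {n : ℕ} (R : Fin n → Request n) : ℕ :=
  sInf {c : ℕ | ∃ σ : Equiv.Perm (Fin n), cr R (⇑σ) = c}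

/-- `crossLower R R'`: number of crossings between the edges of `R` and `R'` when
`R` gets the smaller of the two slots. -/
def crossLower {n : ℕ} (R R' : Request n) : ℕ :=
  (if R'.fst < R.fst then 1 else 0) + (if R'.snd < R.fst then 1 else 0) +
  (if R'.fst < R.snd then 1 else 0) + (if R'.snd < R.snd then 1 else 0)

/-- Pairwise minimum number of crossings between two requests. -/
def mincross {n : ℕ} (R R' : Request n) : ℕ :=
  min (crossLower R R') (crossLower R' R)

/-- The instance is 2-regular: every vertex occurs exactly twice among the requests,
counted with multiplicity. -/
def TwoRegular {n : ℕ} (R : Fin n → Request n) : Prop :=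
  ∀ v : Fin n,
    (∑ i : Fin n, ((if (R i).fst = v then 1 else 0) + (if (R i).snd = v then 1 else 0))) = 2

/-- Degree of vertex `v` after the first `k` requests: its number of occurrences
among `R_0, …, R_{k-1}`. -/
def degAt {n : ℕ} (R : Fin n → Request n) (k : ℕ) (v : Fin n) : ℕ :=
  ∑ i ∈ Finset.univ.filter (fun i : Fin n => i.1 < k),
    ((if (R i).fst = v then 1 else 0) + (if (R i).snd = v then 1 else 0))

/-- Free (unfulfilled) slots after the first `k` requests have been assigned by `σ`. -/
def freeAt {n : ℕ} (R : Fin n → Request n) (σ : Fin n → Fin n) (k : ℕ) : Finset (Fin n) :=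
  Finset.univ \ (Finset.univ.filter (fun i : Fin n => i.1 < k)).image σ

/-- `L_V`: the nondecreasing list in which each vertex `v` appears `2 - degAt v` times. -/
def vertexList {n : ℕ} (R : Fin n → Request n) (k : ℕ) : List (Fin n) :=
  Multiset.sort (∑ v : Fin n, Multiset.replicate (2 - degAt R k v) v) (· ≤ ·)

/-- `L_S`: the nondecreasing list containing each free slot twice. -/
def slotList {n : ℕ} (R : Fin n → Request n) (σ : Fin n → Fin n) (k : ℕ) : List (Fin n) :=
  Multiset.sort (∑ s ∈ freeAt R σ k, Multiset.replicate 2 s) (· ≤ ·)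

/-- The propagation arrows of the partial state: the pairs `(L_V(i), L_S(i))`. -/
def arrows {n : ℕ} (R : Fin n → Request n) (σ : Fin n → Fin n) (k : ℕ) :
    List (Fin n × Fin n) :=
  (vertexList R k).zip (slotList R σ k)

/-- An arrow `(v,s)` crosses an edge `(s₁,u)` iff `(s₁ < s ∧ v < u) ∨ (s < s₁ ∧ u < v)`. -/
def arrowEdgeCross {n : ℕ} (v s s₁ u : Fin n) : Prop :=
  (s₁ < s ∧ v < u) ∨ (s < s₁ ∧ u < v)

instance {n : ℕ} (v s s₁ u : Fin n) : Decidable (arrowEdgeCross v s s₁ u) := by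
  unfold arrowEdgeCross; infer_instance

/-- Total number of edge–edge crossings plus edge–propagation-arrow crossings of
the partial state after the first `k` requests are assigned by `σ`. -/
def partialCost {n : ℕ} (R : Fin n → Request n) (σ : Fin n → Fin n) (k : ℕ) : ℕ :=
  (∑ p ∈ Finset.univ.filter (fun p : Fin n × Fin n => p.1 < p.2 ∧ p.2.1 < k),
      pairCross (R p.1) (R p.2) (σ p.1) (σ p.2)) +
  ∑ i ∈ Finset.univ.filter (fun i : Fin n => i.1 < k),
    ((arrows R σ k).map (fun a =>
        (if arrowEdgeCross a.1 a.2 (σ i) (R i).fst then 1 else 0) +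
        (if arrowEdgeCross a.1 a.2 (σ i) (R i).snd then 1 else 0))).sum

/-- A run of the greedy algorithm: each arriving request `R_k` is assigned to a free
slot minimizing the total number of edge–edge plus edge–arrow crossings of the
resulting partial state. -/
def GreedyRun {n : ℕ} (R : Fin n → Request n) (σ : Equiv.Perm (Fin n)) : Prop :=
  ∀ (k : Fin n) (s : Fin n), s ∈ freeAt R (⇑σ) k.1 →
    partialCost R (⇑σ) (k.1 + 1) ≤ partialCost R (Function.update (⇑σ) k s) (k.1 + 1)


section AuxShift

open List

variable {α : Type*} [LinearOrder α] [DecidableEq α]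

private lemma countP_disj' (p q : α → Bool) (hpq : ∀ x, ¬(p x = true ∧ q x = true)) :
    ∀ L : List α, L.countP (fun x => p x || q x) = L.countP p + L.countP q
  | [] => by simp
  | x :: L => by
    have := countP_disj' p q hpq L
    have hx := hpq x
    simp only [countP_cons, this]
    cases hp : p x <;> cases hq : q x <;> simp_all <;> omega

private lemma count_bound_lt' (L : List α) (h : L.Pairwise (· ≤ ·)) {p : ℕ} (hp : p < L.length)
    {w : α} (hw : w < L[p]) : L.countP (fun x => decide (x < w)) + L.count w ≤ p := by
  have key : L.countP (fun x => decide (x ≤ w)) ≤ p := by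
    have hsplit : L.countP (fun x => decide (x ≤ w)) =
        (L.take p).countP (fun x => decide (x ≤ w)) +
          (L.drop p).countP (fun x => decide (x ≤ w)) := by
      conv_lhs => rw [← List.take_append_drop p L]
      rw [countP_append]
    have h2 : (L.drop p).countP (fun x => decide (x ≤ w)) = 0 := by
      rw [countP_eq_zero]
      intro a ha
      obtain ⟨i, hi, hia⟩ := List.getElem_of_mem ha
      have hi' : p + i < L.length := by
        have := (List.length_drop (i := p) (l := L)) ▸ hi; omega
      have : L[p] ≤ L[p + i] := by
        rcases Nat.eq_zero_or_pos i with rfl | hipos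
        · simp
        · exact h.rel_get_of_lt (a := ⟨p, hp⟩) (b := ⟨p + i, hi'⟩) (by simpa using hipos)
      rw [List.getElem_drop] at hia
      subst hia
      simpa using not_le.2 (lt_of_lt_of_le hw this)
    have h1 : (L.take p).countP (fun x => decide (x ≤ w)) ≤ p := by
      calc (L.take p).countP _ ≤ (L.take p).length := List.countP_le_length
        _ ≤ p := by simp
    omega
  have hco : L.count w = L.countP (fun x => decide (x = w)) := by
    rw [List.count_eq_countP]; rfl
  have := countP_disj' (fun x => decide (x < w)) (fun x => decide (x = w))
    (by intro x; simp; intro h1 h2; subst h2; exact absurd h1 (lt_irrefl _)) L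
  have hmono : L.countP (fun x => decide (x < w) || decide (x = w)) =
      L.countP (fun x => decide (x ≤ w)) := by
    apply List.countP_congr
    intro x _
    simp [le_iff_lt_or_eq]
  omega

private lemma count_bound_gt' (L : List α) (h : L.Pairwise (· ≤ ·)) {p : ℕ} (hp : p < L.length)
    {w : α} (hw : L[p] < w) : p + 1 ≤ L.countP (fun x => decide (x < w)) := by
  have hsplit : L.countP (fun x => decide (x < w)) =
      (L.take (p+1)).countP (fun x => decide (x < w)) +
        (L.drop (p+1)).countP (fun x => decide (x < w)) := by
    conv_lhs => rw [← List.take_append_drop (p+1) L]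
    rw [countP_append]
  have h1 : (L.take (p+1)).countP (fun x => decide (x < w)) = p + 1 := by
    have hlen : (L.take (p+1)).length = p + 1 := by simp; omega
    have hall : ∀ a ∈ L.take (p+1), decide (a < w) = true := by
      intro a ha
      obtain ⟨i, hi, hia⟩ := List.getElem_of_mem ha
      rw [hlen] at hi
      have hi' : i < L.length := by omega
      have hget : a = L[i] := by rw [← hia, List.getElem_take]
      have : L[i] ≤ L[p] := by
        rcases Nat.eq_or_lt_of_le (Nat.le_of_lt_succ hi) with he | hlt
        · subst he; exact le_rfl
        · exact h.rel_get_of_lt (a := ⟨i, hi'⟩) (b := ⟨p, hp⟩) hlt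
      subst hget
      simpa using lt_of_le_of_lt this hw
    rw [List.countP_eq_length.2 hall, hlen]
  omega

private lemma zip_filter_sorted' (w : α) : ∀ (L B : List α), L.Pairwise (· ≤ ·) →
    ((L.zip B).filter (fun p => p.1 = w)).map Prod.snd
      = (B.drop (L.countP (fun x => decide (x < w)))).take (L.count w)
  | [], B, _ => by simp
  | x :: L, [], _ => by simp
  | x :: L, b :: B, h => by
    have hL : L.Pairwise (· ≤ ·) := h.of_cons
    have ih := zip_filter_sorted' w L B hL
    rcases lt_trichotomy x w with hx | hx | hx
    · have : x ≠ w := ne_of_lt hx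
      simp [List.zip_cons_cons, List.filter_cons, this, hx, List.count_cons, ih]
    · subst hx
      have h0 : L.countP (fun y => decide (y < x)) = 0 := by
        rw [List.countP_eq_zero]
        intro a ha
        simpa using not_lt.2 (List.rel_of_pairwise_cons h ha)
      simp [List.zip_cons_cons, List.filter_cons, List.count_cons, ih, h0, Nat.add_comm]
    · have hcount : (x :: L).count w = 0 := by
        rw [List.count_eq_zero]
        intro hw
        rcases List.mem_cons.1 hw with h1 | h1
        · exact absurd h1.symm (ne_of_lt hx).symm
        · exact absurd rfl (ne_of_gt (lt_of_lt_of_le hx (List.rel_of_pairwise_cons h h1))).symm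
      rw [hcount]
      simp only [take_zero, map_eq_nil_iff, filter_eq_nil_iff]
      intro p hp
      have hmem : p.1 ∈ x :: L := List.of_mem_zip hp |>.1
      have : w < p.1 := by
        rcases List.mem_cons.1 hmem with h1 | h1
        · exact h1 ▸ hx
        · exact lt_of_lt_of_le hx (List.rel_of_pairwise_cons h h1)
      simpa using ne_of_gt this

private lemma card_filter_lt_fin' (n k : ℕ) (hk : k ≤ n) :
    (Finset.univ.filter (fun i : Fin n => i.1 < k)).card = k := by
  have : (Finset.univ.filter (fun i : Fin n => i.1 < k)) =
      Finset.map (Fin.castLEEmb hk) Finset.univ := by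
    ext i
    simp only [Finset.mem_filter, Finset.mem_univ, true_and, Finset.mem_map]
    constructor
    · intro h; exact ⟨⟨i.1, h⟩, rfl⟩
    · rintro ⟨j, rfl⟩; exact j.2
  rw [this]; simp

end AuxShift


section AuxShift2
open List

private lemma filter_succ_eq {n : ℕ} (k : ℕ) (hk : k < n) :
    (Finset.univ.filter (fun i : Fin n => i.1 < k + 1))
      = insert ⟨k, hk⟩ (Finset.univ.filter (fun i : Fin n => i.1 < k)) := by
  ext i
  simp only [Finset.mem_filter, Finset.mem_univ, true_and, Finset.mem_insert, Fin.ext_iff]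
  omega

private lemma deg_le_two {n : ℕ} (R : Fin n → Request n) (hR : TwoRegular R) (j : ℕ)
    (v : Fin n) : degAt R j v ≤ 2 := by
  rw [← hR v]
  exact Finset.sum_le_sum_of_subset (Finset.filter_subset _ _)

private lemma sum_replicate_ite {n : ℕ} (z : Fin n) :
    (∑ v : Fin n, Multiset.replicate (if z = v then 1 else 0) v) = {z} := by
  have h : ∀ v : Fin n, Multiset.replicate (if z = v then 1 else 0) v
      = if z = v then ({v} : Multiset (Fin n)) else 0 := by
    intro v; split <;> simp
  rw [Finset.sum_congr rfl fun v _ => h v, Finset.sum_ite_eq]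
  simp

private lemma vertex_multiset_step {n : ℕ} (R : Fin n → Request n) (hR : TwoRegular R)
    (k : ℕ) (hk : k < n) :
    (∑ v : Fin n, Multiset.replicate (2 - degAt R k v) v)
      = (∑ v : Fin n, Multiset.replicate (2 - degAt R (k + 1) v) v)
        + ({(R ⟨k, hk⟩).fst} + {(R ⟨k, hk⟩).snd}) := by
  have hdeg : ∀ v, degAt R (k + 1) v = degAt R k v
      + ((if (R ⟨k, hk⟩).fst = v then 1 else 0) + (if (R ⟨k, hk⟩).snd = v then 1 else 0)) := by
    intro v
    unfold degAt
    rw [filter_succ_eq k hk, Finset.sum_insert (by simp)]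
    exact add_comm _ _
  have hsplit : ∀ v : Fin n, Multiset.replicate (2 - degAt R k v) v
      = Multiset.replicate (2 - degAt R (k + 1) v) v
        + (Multiset.replicate (if (R ⟨k, hk⟩).fst = v then 1 else 0) v
           + Multiset.replicate (if (R ⟨k, hk⟩).snd = v then 1 else 0) v) := by
    intro v
    rw [← Multiset.replicate_add, ← Multiset.replicate_add]
    congr 1
    have h1 := hdeg v
    have h2 := deg_le_two R hR (k + 1) v
    omega
  rw [Finset.sum_congr rfl fun v _ => hsplit v, Finset.sum_add_distrib,
    Finset.sum_add_distrib, sum_replicate_ite, sum_replicate_ite]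

private lemma free_step {n : ℕ} (R : Fin n → Request n) (σ : Fin n → Fin n) (k : ℕ)
    (hk : k < n) :
    freeAt R σ (k + 1) = (freeAt R σ k).erase (σ ⟨k, hk⟩) := by
  unfold freeAt
  rw [filter_succ_eq k hk, Finset.image_insert]
  ext s
  simp only [Finset.mem_sdiff, Finset.mem_univ, true_and, Finset.mem_insert,
    Finset.mem_erase, Finset.mem_image]
  push_neg
  exact Iff.rfl

private lemma slot_multiset_step {n : ℕ} (R : Fin n → Request n) (σ : Fin n → Fin n)
    (k : ℕ) (hk : k < n) (hfree : σ ⟨k, hk⟩ ∈ freeAt R σ k) :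
    (∑ s ∈ freeAt R σ k, Multiset.replicate 2 s)
      = (∑ s ∈ freeAt R σ (k + 1), Multiset.replicate 2 s)
        + Multiset.replicate 2 (σ ⟨k, hk⟩) := by
  rw [free_step R σ k hk]
  exact (Finset.sum_erase_add _ _ hfree).symm

private lemma vperm' {n : ℕ} (R : Fin n → Request n) (hR : TwoRegular R) (k : ℕ)
    (hk : k < n) :
    vertexList R k ~ vertexList R (k + 1) ++ [(R ⟨k, hk⟩).fst, (R ⟨k, hk⟩).snd] := by
  rw [← Multiset.coe_eq_coe]
  unfold vertexList
  rw [show ((Multiset.sort (∑ v : Fin n, Multiset.replicate (2 - degAt R (k+1) v) v) (· ≤ ·)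
      ++ [(R ⟨k, hk⟩).fst, (R ⟨k, hk⟩).snd] : List (Fin n)) : Multiset (Fin n))
    = ↑(Multiset.sort (∑ v : Fin n, Multiset.replicate (2 - degAt R (k+1) v) v) (· ≤ ·))
      + ↑[(R ⟨k, hk⟩).fst, (R ⟨k, hk⟩).snd] from rfl]
  rw [Multiset.sort_eq, Multiset.sort_eq, vertex_multiset_step R hR k hk]
  congr 1

private lemma sperm' {n : ℕ} (R : Fin n → Request n) (σ : Fin n → Fin n) (k : ℕ)
    (hk : k < n) (hfree : σ ⟨k, hk⟩ ∈ freeAt R σ k) :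
    slotList R σ k ~ slotList R σ (k + 1) ++ [σ ⟨k, hk⟩, σ ⟨k, hk⟩] := by
  rw [← Multiset.coe_eq_coe]
  unfold slotList
  rw [show ((Multiset.sort (∑ s ∈ freeAt R σ (k+1), Multiset.replicate 2 s) (· ≤ ·)
      ++ [σ ⟨k, hk⟩, σ ⟨k, hk⟩] : List (Fin n)) : Multiset (Fin n))
    = ↑(Multiset.sort (∑ s ∈ freeAt R σ (k+1), Multiset.replicate 2 s) (· ≤ ·))
      + ↑[σ ⟨k, hk⟩, σ ⟨k, hk⟩] from rfl]
  rw [Multiset.sort_eq, Multiset.sort_eq, slot_multiset_step R σ k hk hfree]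
  congr 1

end AuxShift2


section AuxShift3
open List

private lemma vertexList_length {n : ℕ} (R : Fin n → Request n) (hR : TwoRegular R)
    (k : ℕ) (hk : k ≤ n) : (vertexList R k).length = 2 * n - 2 * k := by
  unfold vertexList
  rw [Multiset.length_sort]
  have hcard : Multiset.card (∑ v : Fin n, Multiset.replicate (2 - degAt R k v) v)
      = ∑ v : Fin n, (2 - degAt R k v) := by simp
  have hdegsum : (∑ v : Fin n, degAt R k v) = 2 * k := by
    unfold degAt
    rw [Finset.sum_comm]
    have h2 : ∀ i : Fin n, (∑ v : Fin n,
        ((if (R i).fst = v then 1 else 0) + (if (R i).snd = v then 1 else 0))) = 2 := by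
      intro i
      rw [Finset.sum_add_distrib, Finset.sum_ite_eq, Finset.sum_ite_eq]
      simp
    rw [Finset.sum_congr rfl fun i _ => h2 i, Finset.sum_const, card_filter_lt_fin' n k hk]
    simp [Nat.mul_comm]
  have hsum : (∑ v : Fin n, (2 - degAt R k v)) + (∑ v : Fin n, degAt R k v)
      = ∑ v : Fin n, 2 := by
    rw [← Finset.sum_add_distrib]
    refine Finset.sum_congr rfl fun v _ => ?_
    have := deg_le_two R hR k v
    omega
  have htwo : (∑ _v : Fin n, 2) = 2 * n := by
    rw [Finset.sum_const]
    simp [Nat.mul_comm]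
  omega

private lemma slotList_length {n : ℕ} (R : Fin n → Request n) (σ : Fin n → Fin n)
    (k : ℕ) (hk : k ≤ n) (hinj : ∀ i j : Fin n, i.1 < k → j.1 < k → σ i = σ j → i = j) :
    (slotList R σ k).length = 2 * (n - k) := by
  unfold slotList
  rw [Multiset.length_sort]
  have hcard : Multiset.card (∑ s ∈ freeAt R σ k, Multiset.replicate 2 s)
      = ∑ _s ∈ freeAt R σ k, 2 := by simp
  have himg : ((Finset.univ.filter (fun i : Fin n => i.1 < k)).image σ).card = k := by
    rw [Finset.card_image_of_injOn, card_filter_lt_fin' n k hk]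
    intro i hi j hj hij
    exact hinj i j (Finset.mem_filter.1 hi).2 (Finset.mem_filter.1 hj).2 hij
  have hfc : (freeAt R σ k).card = n - k := by
    unfold freeAt
    rw [Finset.card_sdiff_of_subset (Finset.subset_univ _), himg]
    simp
  rw [hcard, Finset.sum_const, hfc]
  simp [Nat.mul_comm]

end AuxShift3

/-- Shifting of propagation arrows: if the `(k+1)`-st request `R_k = {x₁,x₂}` of a
2-regular instance is assigned to the free slot `s_x = σ ⟨k,hk⟩`, and `y₁ ≤ y₂` are
the vertices whose propagation arrows pointed to `s_x` before the assignment, then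
every vertex outside the closed interval `[min x₁ y₁, max x₂ y₂]` has exactly the
same propagation-arrow targets before and after the assignment. -/
theorem arrows_shift_local {n : ℕ} (R : Fin n → Request n) (hR : TwoRegular R)
    (σ : Fin n → Fin n) (k : ℕ) (hk : k < n)
    (hinj : ∀ i j : Fin n, i.1 < k + 1 → j.1 < k + 1 → σ i = σ j → i = j)
    (hfree : σ ⟨k, hk⟩ ∈ freeAt R σ k)
    (y₁ y₂ : Fin n) (hy : y₁ ≤ y₂)
    (hy₁ : (y₁, σ ⟨k, hk⟩) ∈ arrows R σ k)
    (hy₂ : (y₂, σ ⟨k, hk⟩) ∈ arrows R σ k)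
    (hall : ∀ p ∈ arrows R σ k, p.2 = σ ⟨k, hk⟩ → p.1 = y₁ ∨ p.1 = y₂)
    (w : Fin n)
    (hw : w < min (R ⟨k, hk⟩).fst y₁ ∨ max (R ⟨k, hk⟩).snd y₂ < w) :
    ((arrows R σ k).filter (fun p => p.1 = w)).map Prod.snd =
      ((arrows R σ (k + 1)).filter (fun p => p.1 = w)).map Prod.snd := by
  classical
  have hreq : (R ⟨k, hk⟩).fst < (R ⟨k, hk⟩).snd := (R ⟨k, hk⟩).lt
  set x₁ := (R ⟨k, hk⟩).fst with hx1
  set x₂ := (R ⟨k, hk⟩).snd with hx2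
  set sx := σ ⟨k, hk⟩ with hsx
  set A := vertexList R k with hA
  set A' := vertexList R (k + 1) with hA'
  set B := slotList R σ k with hBd
  set B' := slotList R σ (k + 1) with hB'
  have harr : arrows R σ k = A.zip B := by rw [hA, hBd]; rfl
  have harr' : arrows R σ (k + 1) = A'.zip B' := by rw [hA', hB']; rfl
  have hsortA : A.Pairwise (· ≤ ·) := Multiset.pairwise_sort _ _
  have hsortA' : A'.Pairwise (· ≤ ·) := Multiset.pairwise_sort _ _
  have hsortB : B.Pairwise (· ≤ ·) := Multiset.pairwise_sort _ _
  have hsortB' : B'.Pairwise (· ≤ ·) := Multiset.pairwise_sort _ _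
  have hVperm : A.Perm (A' ++ [x₁, x₂]) := vperm' R hR k hk
  have hSperm : B.Perm (B' ++ [sx, sx]) := sperm' R σ k hk hfree
  have hlenA : A.length = 2 * n - 2 * k := vertexList_length R hR k hk.le
  have hlenB : B.length = 2 * (n - k) :=
    slotList_length R σ k hk.le (fun i j hi hj => hinj i j (by omega) (by omega))
  have hlenAB : A.length = B.length := by rw [hlenA, hlenB]; omega
  -- decomposition of B around the two copies of sx
  set b := B'.countP (fun s => decide (s < sx)) with hbdef
  have hble : b ≤ B'.length := List.countP_le_length
  set P := B'.take b with hP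
  set S := B'.drop b with hS
  have hPS : B' = P ++ S := (List.take_append_drop b B').symm
  have hlenP : P.length = b := by rw [hP, List.length_take]; omega
  have hPle : ∀ u ∈ P, u ≤ sx := by
    intro u hu
    obtain ⟨i, hi, hiu⟩ := List.getElem_of_mem hu
    have hib : i < b := by rw [hlenP] at hi; exact hi
    have hiB : i < B'.length := by omega
    have hgu : u = B'[i] := by rw [← hiu]; simp [hP]
    by_contra hlt
    push_neg at hlt
    rw [hgu] at hlt
    have := count_bound_lt' B' hsortB' hiB hlt
    omega
  have hSge : ∀ u ∈ S, sx ≤ u := by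
    intro u hu
    obtain ⟨j, hj, hju⟩ := List.getElem_of_mem hu
    have hjB : b + j < B'.length := by rw [hS, List.length_drop] at hj; omega
    have hgu : u = B'[b + j] := by rw [← hju]; simp [hS]
    by_contra hlt
    push_neg at hlt
    rw [hgu] at hlt
    have := count_bound_gt' B' hsortB' hjB hlt
    omega
  have hBdec : B = P ++ sx :: sx :: S := by
    have hperm : B.Perm (P ++ sx :: sx :: S) := by
      refine hSperm.trans ?_
      conv_lhs => rw [hPS]
      rw [List.append_assoc]
      refine List.Perm.append_left P ?_
      exact List.perm_append_comm
    have hsorted2 : (P ++ sx :: sx :: S).Pairwise (· ≤ ·) := by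
      rw [List.pairwise_append]
      refine ⟨List.Pairwise.sublist (List.take_sublist _ _) hsortB', ?_, ?_⟩
      · rw [List.pairwise_cons]
        refine ⟨?_, ?_⟩
        · intro c hc
          rcases List.mem_cons.1 hc with rfl | hc
          · exact le_rfl
          · exact hSge c hc
        · rw [List.pairwise_cons]
          exact ⟨fun c hc => hSge c hc, List.Pairwise.sublist (List.drop_sublist _ _) hsortB'⟩
      · intro u hu c hc
        have h1 := hPle u hu
        rcases List.mem_cons.1 hc with rfl | hc
        · exact h1
        · rcases List.mem_cons.1 hc with rfl | hc
          · exact h1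
          · exact le_trans h1 (hSge c hc)
    exact List.Perm.eq_of_pairwise' hsortB hsorted2 hperm
  have hlenBk : B.length = b + 2 + S.length := by
    rw [hBdec, List.length_append, hlenP]
    simp
    omega
  have hbBlt : b < B.length := by omega
  have hb1Blt : b + 1 < B.length := by omega
  have hbAlt : b < A.length := by omega
  have hb1Alt : b + 1 < A.length := by omega
  have hBb : B[b]'hbBlt = sx := by
    rw [List.getElem_of_eq hBdec, List.getElem_append_right (le_of_eq hlenP)]
    simp [hlenP]
  have hBb1 : B[b + 1]'hb1Blt = sx := by
    rw [List.getElem_of_eq hBdec, List.getElem_append_right (by omega)]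
    have : b + 1 - P.length = 1 := by omega
    simp [this]
  have hmemArr : ∀ (i : ℕ) (hiA : i < A.length) (hiB : i < B.length),
      (A[i], B[i]) ∈ arrows R σ k := by
    intro i hiA hiB
    have hzi : i < (A.zip B).length := by rw [List.length_zip]; omega
    have hmem := List.getElem_mem hzi
    rw [List.getElem_zip] at hmem
    rw [harr]
    exact hmem
  have hAb : A[b]'hbAlt = y₁ ∨ A[b]'hbAlt = y₂ :=
    hall _ (hmemArr b hbAlt hbBlt) hBb
  have hAb1 : A[b + 1]'hb1Alt = y₁ ∨ A[b + 1]'hb1Alt = y₂ :=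
    hall _ (hmemArr (b + 1) hb1Alt hb1Blt) hBb1
  rw [harr, harr', zip_filter_sorted' w A B hsortA, zip_filter_sorted' w A' B' hsortA']
  rcases hw with hw1 | hw2
  · -- w below the interval
    have hwx1 : w < x₁ := lt_of_lt_of_le hw1 (min_le_left _ _)
    have hwy1 : w < y₁ := lt_of_lt_of_le hw1 (min_le_right _ _)
    have hwx2 : w < x₂ := hwx1.trans hreq
    have hm : A.count w = A'.count w := by
      rw [hVperm.count_eq, List.count_append]
      have h0 : List.count w [x₁, x₂] = 0 := by
        rw [List.count_eq_zero]
        intro hmem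
        rcases List.mem_cons.1 hmem with rfl | hmem
        · exact absurd hwx1 (lt_irrefl _)
        · rcases List.mem_cons.1 hmem with rfl | hmem
          · exact absurd hwx2 (lt_irrefl _)
          · simp at hmem
      rw [h0, Nat.add_zero]
    have hcp : A.countP (fun v => decide (v < w)) = A'.countP (fun v => decide (v < w)) := by
      rw [hVperm.countP_eq, List.countP_append]
      have h0 : List.countP (fun v => decide (v < w)) [x₁, x₂] = 0 := by
        simp [List.countP_cons, not_lt.2 hwx1.le, not_lt.2 hwx2.le]
      rw [h0, Nat.add_zero]
    have hAbgt : w < A[b]'hbAlt := by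
      rcases hAb with h | h
      · rw [h]; exact hwy1
      · rw [h]; exact lt_of_lt_of_le hwy1 hy
    have hbound := count_bound_lt' A hsortA hbAlt hAbgt
    rw [hcp, hm] at hbound
    rw [hcp, hm, hBdec]
    conv_rhs => rw [hPS]
    rw [List.drop_append, List.drop_append, hlenP]
    have h0 : A'.countP (fun v => decide (v < w)) - b = 0 := by omega
    rw [h0, List.drop_zero, List.drop_zero, List.take_append,
      List.take_append]
    have h1 : A'.count w - (P.drop (A'.countP (fun v => decide (v < w)))).length = 0 := by
      rw [List.length_drop, hlenP]; omega
    rw [h1]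
    simp
  · -- w above the interval
    have hx2w : x₂ < w := lt_of_le_of_lt (le_max_left _ _) hw2
    have hy2w : y₂ < w := lt_of_le_of_lt (le_max_right _ _) hw2
    have hx1w : x₁ < w := hreq.trans hx2w
    have hm : A.count w = A'.count w := by
      rw [hVperm.count_eq, List.count_append]
      have h0 : List.count w [x₁, x₂] = 0 := by
        rw [List.count_eq_zero]
        intro hmem
        rcases List.mem_cons.1 hmem with rfl | hmem
        · exact absurd hx1w (lt_irrefl _)
        · rcases List.mem_cons.1 hmem with rfl | hmem
          · exact absurd hx2w (lt_irrefl _)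
          · simp at hmem
      rw [h0, Nat.add_zero]
    have hcp : A.countP (fun v => decide (v < w))
        = A'.countP (fun v => decide (v < w)) + 2 := by
      rw [hVperm.countP_eq, List.countP_append]
      have h0 : List.countP (fun v => decide (v < w)) [x₁, x₂] = 2 := by
        simp [List.countP_cons, hx1w, hx2w]
      rw [h0]
    have hAb1lt : A[b + 1]'hb1Alt < w := by
      rcases hAb1 with h | h
      · rw [h]; exact lt_of_le_of_lt hy hy2w
      · rw [h]; exact hy2w
    have hbound := count_bound_gt' A hsortA hb1Alt hAb1lt
    rw [hcp] at hbound
    rw [hcp, hm, hBdec]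
    conv_rhs => rw [hPS]
    rw [List.drop_append, List.drop_append, hlenP]
    have e1 : P.drop (A'.countP (fun v => decide (v < w)) + 2) = [] :=
      List.drop_eq_nil_of_le (by rw [hlenP]; omega)
    have e2 : P.drop (A'.countP (fun v => decide (v < w))) = [] :=
      List.drop_eq_nil_of_le (by rw [hlenP]; omega)
    have e3 : A'.countP (fun v => decide (v < w)) + 2 - b
        = (A'.countP (fun v => decide (v < w)) - b) + 2 := by omega
    rw [e1, e2, e3]
    simp
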